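/- Let q be a real number with q > 0 and q ≠ 1, and let φ : W^q → W^q be an even q-derivation of degree s ∈ ℤ, i.e. φ is linear, φ(L_n) ∈ span{L_{n+s}} and φ(G_n) ∈ span{G_{n+s}} for all n ∈ ℤ, and φ([x,y]) = (1/(1+q^{s}))·([φ(x),α(y)] + [α(x),φ(y)]) for all homogeneous x,y ∈ W^q. Then φ is a scalar multiple of the inner q-derivation ad_{L_s} : x ↦ [L_s, x]. Hence (Der W^q)₀ = ⊕_{s∈ℤ} ⟨ad_{L_s}⟩. -/

import Mathlib

/-- The `q`-number `{n} = (1 - qⁿ)/(1 - q)`. -/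
noncomputable def qInt (q : ℂ) (n : ℤ) : ℂ := (1 - q ^ n) / (1 - q)

/-- The grading of the `q`-deformed Witt superalgebra: even part spanned by the `L n`
(`= b (Sum.inl n)`), odd part spanned by the `G n` (`= b (Sum.inr n)`). -/
def wGr {W : Type*} [AddCommGroup W] [Module ℂ W] (b : Module.Basis (ℤ ⊕ ℤ) ℂ W) :
    ZMod 2 → Submodule ℂ W :=
  fun i => if i = 0 then Submodule.span ℂ (Set.range fun n : ℤ => b (Sum.inl n))
           else Submodule.span ℂ (Set.range fun n : ℤ => b (Sum.inr n))

set_option maxHeartbeats 1600000 in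
/-- For real `q > 0`, `q ≠ 1`: every even `q`-derivation of degree `s` of
the `q`-deformed Witt superalgebra is a scalar multiple of the inner `q`-derivation
`ad_{L_s} : x ↦ [L_s, x]`, and `ad_{L_s}` is itself an even `q`-derivation of degree `s`.
Hence `(Der W^q)₀ = ⊕_{s ∈ ℤ} ⟨ad_{L_s}⟩`. -/
theorem qWitt_even_qDerivations
    (q : ℝ) (hq0 : 0 < q) (hq1 : q ≠ 1)
    (W : Type*) [AddCommGroup W] [Module ℂ W] (b : Module.Basis (ℤ ⊕ ℤ) ℂ W)
    (br : W → W → W)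
    (hbr1 : ∀ x, IsLinearMap ℂ (br x)) (hbr2 : ∀ y, IsLinearMap ℂ fun x => br x y)
    (α : W → W) (hα : IsLinearMap ℂ α)
    (hLL : ∀ n m : ℤ, br (b (Sum.inl n)) (b (Sum.inl m)) =
        (qInt q m - qInt q n) • b (Sum.inl (n + m)))
    (hLG : ∀ n m : ℤ, br (b (Sum.inl n)) (b (Sum.inr m)) =
        (qInt q (m + 1) - qInt q n) • b (Sum.inr (n + m)))
    (hGL : ∀ n m : ℤ, br (b (Sum.inr m)) (b (Sum.inl n)) =
        -((qInt q (m + 1) - qInt q n) • b (Sum.inr (n + m))))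
    (hGG : ∀ n m : ℤ, br (b (Sum.inr n)) (b (Sum.inr m)) = 0)
    (hαL : ∀ n : ℤ, α (b (Sum.inl n)) = (1 + (q : ℂ) ^ n) • b (Sum.inl n))
    (hαG : ∀ n : ℤ, α (b (Sum.inr n)) = (1 + (q : ℂ) ^ (n + 1)) • b (Sum.inr n))
    -- φ is an even q-derivation of degree s
    (s : ℤ) (φ : W → W) (hφ : IsLinearMap ℂ φ)
    (hφL : ∀ n : ℤ, φ (b (Sum.inl n)) ∈ Submodule.span ℂ {b (Sum.inl (n + s))})
    (hφG : ∀ n : ℤ, φ (b (Sum.inr n)) ∈ Submodule.span ℂ {b (Sum.inr (n + s))})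
    (hleib : ∀ (i j : ZMod 2), ∀ x ∈ wGr b i, ∀ y ∈ wGr b j,
        φ (br x y) = (1 / (1 + (q : ℂ) ^ s)) •
          (br (φ x) (α y) + br (α x) (φ y))) :
    (∃ c : ℂ, ∀ x : W, φ x = c • br (b (Sum.inl s)) x) ∧
    -- ad_{L_s} is itself an even q-derivation of degree s
    (∀ n : ℤ, br (b (Sum.inl s)) (b (Sum.inl n)) ∈ Submodule.span ℂ {b (Sum.inl (n + s))}) ∧
    (∀ n : ℤ, br (b (Sum.inl s)) (b (Sum.inr n)) ∈ Submodule.span ℂ {b (Sum.inr (n + s))}) ∧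
    (∀ (i j : ZMod 2), ∀ x ∈ wGr b i, ∀ y ∈ wGr b j,
        br (b (Sum.inl s)) (br x y) = (1 / (1 + (q : ℂ) ^ s)) •
          (br (br (b (Sum.inl s)) x) (α y) + br (α x) (br (b (Sum.inl s)) y))) := by
  set K : ℂ := (q : ℂ) with hK
  have hq' : K ≠ 0 := by
    simp only [hK]
    exact_mod_cast hq0.ne'
  have hq1' : K ≠ 1 := by
    simp only [hK]
    exact_mod_cast hq1
  have h1q : (1:ℂ) - K ≠ 0 := sub_ne_zero.mpr (Ne.symm hq1')
  have hpow : ∀ n : ℤ, K ^ n = ((q ^ n : ℝ) : ℂ) := fun n => by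
    rw [hK]; push_cast; ring
  have hpos : ∀ n : ℤ, (1:ℂ) + K ^ n ≠ 0 := by
    intro n
    rw [hpow n]
    have h : (0:ℝ) < 1 + q ^ n := by positivity
    intro hc
    exact h.ne' (by exact_mod_cast hc)
  have hone : ∀ n : ℤ, K ^ n = 1 → n = 0 := by
    intro n h
    rw [hpow n] at h
    have : q ^ n = (1:ℝ) := by exact_mod_cast h
    exact (zpow_eq_one_iff_right₀ hq0.le hq1).mp this
  have hinj : ∀ n m : ℤ, qInt K n = qInt K m → n = m := by
    intro n m h
    have h2 : K ^ n = K ^ m := by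
      simp only [qInt, div_eq_div_iff h1q h1q] at h
      have := mul_right_cancel₀ h1q h
      linear_combination -this
    have h3 : K ^ (n - m) = 1 := by
      rw [zpow_sub₀ hq', h2, div_self (zpow_ne_zero _ hq')]
    have := hone _ h3
    omega
  -- bilinearity helpers
  have bsl : ∀ (x y : W) (c : ℂ), br x (c • y) = c • br x y := fun x y c => (hbr1 x).map_smul c y
  have bsr : ∀ (x y : W) (c : ℂ), br (c • x) y = c • br x y := fun x y c => (hbr2 y).map_smul c x
  have hL0 : ∀ n : ℤ, b (Sum.inl n) ∈ wGr b 0 := by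
    intro n
    simp only [wGr, if_pos rfl]
    exact Submodule.subset_span ⟨n, rfl⟩
  have hG1 : ∀ n : ℤ, b (Sum.inr n) ∈ wGr b 1 := by
    intro n
    simp only [wGr, if_neg (by decide : (1 : ZMod 2) ≠ 0)]
    exact Submodule.subset_span ⟨n, rfl⟩
  have hcan : ∀ (i : ℤ ⊕ ℤ) (a c : ℂ), a • b i = c • b i → a = c :=
    fun i a c h => smul_left_injective ℂ (b.ne_zero i) h
  -- extract coefficients
  have hfe : ∀ n : ℤ, ∃ c : ℂ, φ (b (Sum.inl n)) = c • b (Sum.inl (n + s)) := by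
    intro n
    rcases Submodule.mem_span_singleton.mp (hφL n) with ⟨c, hc⟩
    exact ⟨c, hc.symm⟩
  choose f hf using hfe
  have hge : ∀ n : ℤ, ∃ c : ℂ, φ (b (Sum.inr n)) = c • b (Sum.inr (n + s)) := by
    intro n
    rcases Submodule.mem_span_singleton.mp (hφG n) with ⟨c, hc⟩
    exact ⟨c, hc.symm⟩
  choose g hg using hge
  -- the two structure equations
  have E1 : ∀ n m : ℤ, (qInt K m - qInt K n) * f (n + m) * (1 + K ^ s)
      = f n * (1 + K ^ m) * (qInt K m - qInt K (n + s))
        + (1 + K ^ n) * f m * (qInt K (m + s) - qInt K n) := by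
    intro n m
    have h := hleib 0 0 _ (hL0 n) _ (hL0 m)
    rw [hLL n m, hφ.map_smul, hf (n + m), hf n, hf m, hαL n, hαL m,
        bsr, bsl, bsl, bsr, hLL (n + s) m, hLL n (m + s),
        show n + s + m = n + m + s from by ring, show n + (m + s) = n + m + s from by ring] at h
    simp only [smul_smul] at h
    rw [← add_smul, smul_smul] at h
    have h2 := hcan _ _ _ h
    field_simp [hpos s] at h2
    linear_combination h2
  have E2 : ∀ n m : ℤ, (qInt K (m + 1) - qInt K n) * g (n + m) * (1 + K ^ s)
      = f n * (1 + K ^ (m + 1)) * (qInt K (m + 1) - qInt K (n + s))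
        + (1 + K ^ n) * g m * (qInt K (m + s + 1) - qInt K n) := by
    intro n m
    have h := hleib 0 1 _ (hL0 n) _ (hG1 m)
    rw [hLG n m, hφ.map_smul, hg (n + m), hf n, hg m, hαL n, hαG m,
        bsr, bsl, bsl, bsr, hLG (n + s) m, hLG n (m + s),
        show n + s + m = n + m + s from by ring, show n + (m + s) = n + m + s from by ring,
        show m + s + 1 = m + s + 1 from rfl] at h
    simp only [smul_smul] at h
    rw [← add_smul, smul_smul] at h
    have h2 := hcan _ _ _ h
    field_simp [hpos s] at h2
    linear_combination h2
  have q0 : qInt K 0 = 0 := by simp [qInt]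
  have q1 : qInt K 1 = 1 := by rw [qInt, zpow_one]; exact div_self h1q
  -- relation forcing f n in terms of f 0 when s ≠ 0
  have hc2 : ∀ n : ℤ, f n * qInt K s = f 0 * (qInt K s - qInt K n) := by
    intro n
    have h := E1 n 0
    rw [add_zero] at h
    have h2 : f n * qInt K s * (1 + K ^ n) = f 0 * (qInt K s - qInt K n) * (1 + K ^ n) := by
      simp only [qInt, zpow_add₀ hq', zpow_zero] at h ⊢
      linear_combination h
    exact mul_right_cancel₀ (hpos n) h2
  have hc2g : ∀ m : ℤ, g m * qInt K s = f 0 * (qInt K s - qInt K (m + 1)) := by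
    intro m
    have h := E2 0 m
    rw [zero_add] at h
    have h2 : g m * qInt K s * (1 + K ^ (m + 1)) = f 0 * (qInt K s - qInt K (m + 1)) * (1 + K ^ (m + 1)) := by
      simp only [qInt, zpow_add₀ hq', zpow_zero, zpow_one] at h ⊢
      linear_combination -h
    exact mul_right_cancel₀ (hpos (m + 1)) h2
  have hpos1 : (1:ℂ) + K ≠ 0 := by have := hpos 1; rwa [zpow_one] at this
  have zK : K ^ (-1:ℤ) * K = 1 := by
    rw [zpow_neg, zpow_one]; exact inv_mul_cancel₀ hq'
  have z2 : K ^ (-2:ℤ) * (K * K) = 1 := by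
    rw [zpow_neg, show ((2:ℤ)) = 1 + 1 from rfl, zpow_add₀ hq', zpow_one]
    exact inv_mul_cancel₀ (mul_ne_zero hq' hq')
  -- the coefficient function is determined
  have hco : ∃ c : ℂ, (∀ n : ℤ, f n = c * (qInt K n - qInt K s)) ∧
      (∀ n : ℤ, g n = c * (qInt K (n + 1) - qInt K s)) := by
    by_cases hs0 : s = 0
    · subst hs0
      have hf0 : f 0 = 0 := by
        have h := hc2 1
        rw [q0, q1] at h
        linear_combination h
      have hA : ∀ n : ℤ, n ≠ 1 → 2 * f (n + 1) = f n * (1 + K) + f 1 * (1 + K ^ n) := by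
        intro n hn
        have h := E1 n 1
        simp only [add_zero, zpow_zero, zpow_one] at h
        have h3 : (qInt K 1 - qInt K n) * (2 * f (n + 1))
            = (qInt K 1 - qInt K n) * (f n * (1 + K) + f 1 * (1 + K ^ n)) := by
          linear_combination h
        exact mul_left_cancel₀ (sub_ne_zero.mpr fun hh => hn (hinj _ _ hh).symm) h3
      have hfm1raw := hA (-1) (by decide)
      rw [show (-1:ℤ) + 1 = 0 from by norm_num, hf0] at hfm1raw
      have hfm1K : f (-1) * ((1 + K) * K) = -(f 1 * (K + 1)) := by
        linear_combination (-K) * hfm1raw - f 1 * zK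
      have hB : ∀ n : ℤ, n ≠ -2 →
          2 * f n * K = f (n + 1) * (K + 1) + f (-1) * (K + K ^ n * K * K) := by
        intro n hn
        have h := E1 (n + 1) (-1)
        simp only [add_zero, zpow_zero] at h
        rw [show n + 1 + (-1) = n from by ring] at h
        have h3 : (qInt K (-1) - qInt K (n + 1)) * (2 * f n * K)
            = (qInt K (-1) - qInt K (n + 1)) *
              (f (n + 1) * (K + 1) + f (-1) * (K + K ^ (n + 1) * K)) := by
          linear_combination K * h + (qInt K (-1) - qInt K (n + 1)) * f (n + 1) * zK
        have h4 := mul_left_cancel₀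
          (sub_ne_zero.mpr fun hh => (by omega : (-1:ℤ) ≠ n + 1) (hinj _ _ hh)) h3
        rw [zpow_add₀ hq', zpow_one] at h4
        exact h4
      have hfq : ∀ n : ℤ, f n * (1 - K) = f 1 * (1 - K ^ n) := by
        intro n
        by_cases h1 : n = 1
        · subst h1; rw [zpow_one]
        by_cases h2 : n = -2
        · subst h2
          have e4 := hA (-2) (by decide)
          rw [show (-2:ℤ) + 1 = -1 from by norm_num] at e4
          have h4 : f (-2) * (1 - K) * (K * K * ((1 + K) * (1 + K)))
              = f 1 * (1 - K ^ (-2:ℤ)) * (K * K * ((1 + K) * (1 + K))) := by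
            linear_combination (-(1 - K) * (K * K) * (1 + K)) * e4
              + (2 * K * (1 - K)) * hfm1K + (2 * f 1 * K * (1 + K)) * z2
          exact mul_right_cancel₀
            (by exact mul_ne_zero (mul_ne_zero hq' hq') (mul_ne_zero hpos1 hpos1)) h4
        · have e1 := hA n h1
          have e2 := hB n h2
          have h4 : f n * (1 - K) * ((1 + K) * (1 - K))
              = f 1 * (1 - K ^ n) * ((1 + K) * (1 - K)) := by
            linear_combination (-(1 + K) ^ 2) * e1 - (2 * (1 + K)) * e2
              - (2 * (1 + K ^ n * K)) * hfm1K
          exact mul_right_cancel₀ (mul_ne_zero hpos1 h1q) h4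
      -- now the odd part: first g (-1) = 0
      have hC : ∀ n m : ℤ, n ≠ m + 1 →
          2 * g (n + m) = f n * (1 + K ^ (m + 1)) + g m * (1 + K ^ n) := by
        intro n m hnm
        have h := E2 n m
        simp only [add_zero, zpow_zero] at h
        have h3 : (qInt K (m + 1) - qInt K n) * (2 * g (n + m))
            = (qInt K (m + 1) - qInt K n) * (f n * (1 + K ^ (m + 1)) + g m * (1 + K ^ n)) := by
          linear_combination h
        exact mul_left_cancel₀ (sub_ne_zero.mpr fun hh => hnm (hinj _ _ hh).symm) h3
      have ha := hC 1 (-1) (by decide)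
      rw [show (1:ℤ) + (-1) = 0 from by norm_num, show (-1:ℤ) + 1 = 0 from by norm_num,
        zpow_zero, zpow_one] at ha
      have hb := hC (-1) 0 (by decide)
      rw [show (-1:ℤ) + 0 = -1 from by norm_num, show (0:ℤ) + 1 = 1 from by norm_num,
        zpow_one] at hb
      have hgm1 : g (-1) = 0 := by
        have h4 : g (-1) * ((1 - K) * (1 - K)) = 0 * ((1 - K) * (1 - K)) := by
          linear_combination (-(2 * K)) * hb - 2 * hfm1K - (K + K ^ (-1:ℤ) * K) * ha
            - (2 * f 1 + g (-1) * (1 + K)) * zK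
        exact mul_right_cancel₀ (mul_ne_zero h1q h1q) h4
      have hgf : ∀ n : ℤ, g n = f (n + 1) := by
        intro n
        by_cases hn : n = -1
        · subst hn
          rw [hgm1, show (-1:ℤ) + 1 = 0 from by norm_num, hf0]
        · have h := hC (n + 1) (-1) (by omega)
          rw [show n + 1 + (-1) = n from by ring, show (-1:ℤ) + 1 = 0 from by norm_num,
            zpow_zero, hgm1] at h
          linear_combination h / 2
      refine ⟨f 1, fun n => ?_, fun n => ?_⟩
      · rw [q0, sub_zero, qInt]
        field_simp
        linear_combination hfq n
      · rw [q0, sub_zero, qInt, hgf n]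
        field_simp
        linear_combination hfq (n + 1)
    · -- s ≠ 0
      have hqs : qInt K s ≠ 0 := by
        rw [qInt]
        exact div_ne_zero (sub_ne_zero.mpr fun h => hs0 (hone s h.symm)) h1q
      refine ⟨-(f 0) / qInt K s, fun n => ?_, fun n => ?_⟩
      · rw [div_mul_eq_mul_div, eq_div_iff hqs]
        linear_combination hc2 n
      · rw [div_mul_eq_mul_div, eq_div_iff hqs]
        linear_combination hc2g n
  -- more linearity helpers
  have bz1 : ∀ x : W, br x 0 = 0 := fun x => (hbr1 x).map_zero
  have bz2 : ∀ y : W, br 0 y = 0 := fun y => (hbr2 y).map_zero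
  have az : α 0 = 0 := hα.map_zero
  have ba1 : ∀ x y z : W, br x (y + z) = br x y + br x z := fun x y z => (hbr1 x).map_add y z
  have ba2 : ∀ x y z : W, br (x + y) z = br x z + br y z := fun x y z => (hbr2 z).map_add x y
  have aa : ∀ x y : W, α (x + y) = α x + α y := fun x y => hα.map_add x y
  have as : ∀ (c : ℂ) (x : W), α (c • x) = c • α x := fun c x => hα.map_smul c x
  obtain ⟨c, hcf, hcg⟩ := hco
  refine ⟨⟨c, fun x => ?_⟩, fun n => ?_, fun n => ?_, ?_⟩
  · have heq : (IsLinearMap.mk' φ hφ) = c • IsLinearMap.mk' _ (hbr1 (b (Sum.inl s))) := by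
      apply b.ext
      rintro (n | n)
      · simp only [IsLinearMap.mk'_apply, LinearMap.smul_apply]
        rw [hf n, hLL s n, hcf n, show s + n = n + s from add_comm s n, smul_smul]
      · simp only [IsLinearMap.mk'_apply, LinearMap.smul_apply]
        rw [hg n, hLG s n, hcg n, show s + n = n + s from add_comm s n, smul_smul]
    have h := LinearMap.congr_fun heq x
    simpa using h
  · rw [hLL s n]
    exact Submodule.mem_span_singleton.mpr ⟨qInt K n - qInt K s, by rw [add_comm n s]⟩
  · rw [hLG s n]
    exact Submodule.mem_span_singleton.mpr ⟨qInt K (n + 1) - qInt K s, by rw [add_comm n s]⟩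
  · have scal : ∀ (A B C : ℂ) (v : W), A * (1 + K ^ s) = B + C →
        A • v = (1 / (1 + K ^ s)) • (B • v + C • v) := by
      intro A B C v h
      rw [← add_smul, smul_smul]
      congr 1
      rw [one_div_mul_eq_div, eq_div_iff (hpos s)]
      exact h
    have base : ∀ i j : ℤ ⊕ ℤ, br (b (Sum.inl s)) (br (b i) (b j)) = (1 / (1 + K ^ s)) •
        (br (br (b (Sum.inl s)) (b i)) (α (b j)) + br (α (b i)) (br (b (Sum.inl s)) (b j))) := by
      rintro (n | n) (m | m)
      · rw [hLL n m, bsl, hLL s (n + m), hLL s n, hαL m, hLL s m, hαL n,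
          bsr, bsl, bsl, bsr, hLL (s + n) m, hLL n (s + m),
          show s + n + m = s + (n + m) from by ring, show n + (s + m) = s + (n + m) from by ring]
        simp only [smul_neg, smul_smul, ← neg_smul]
        apply scal
        simp only [qInt, zpow_add₀ hq', zpow_one]
        field_simp
        ring
      · rw [hLG n m, bsl, hLG s (n + m), hLL s n, hαG m, hLG s m, hαL n,
          bsr, bsl, bsl, bsr, hLG (s + n) m, hLG n (s + m),
          show s + n + m = s + (n + m) from by ring, show n + (s + m) = s + (n + m) from by ring]
        simp only [smul_neg, smul_smul, ← neg_smul]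
        apply scal
        simp only [qInt, zpow_add₀ hq', zpow_one]
        field_simp
        ring
      · rw [hGL m n, (hbr1 _).map_neg, bsl, hLG s (m + n), hLG s n, hαL m, hLL s m, hαG n,
          bsr, bsl, bsl, bsr, hGL m (s + n), hGL (s + m) n,
          show m + (s + n) = s + (m + n) from by ring, show s + m + n = s + (m + n) from by ring]
        simp only [smul_neg, smul_smul, ← neg_smul]
        apply scal
        simp only [qInt, zpow_add₀ hq', zpow_one]
        field_simp
        ring
      · rw [hGG n m, bz1, hLG s n, hLG s m, hαG n, hαG m,
          bsr, bsl, bsl, bsr, hGG (s + n) m, hGG n (s + m)]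
        simp only [smul_zero, add_zero, zero_add]
    have key : ∀ x y : W, br (b (Sum.inl s)) (br x y) = (1 / (1 + K ^ s)) •
        (br (br (b (Sum.inl s)) x) (α y) + br (α x) (br (b (Sum.inl s)) y)) := by
      have step1 : ∀ (j : ℤ ⊕ ℤ) (x : W), br (b (Sum.inl s)) (br x (b j)) = (1 / (1 + K ^ s)) •
          (br (br (b (Sum.inl s)) x) (α (b j)) + br (α x) (br (b (Sum.inl s)) (b j))) := by
        intro j x
        have hx : x ∈ Submodule.span ℂ (Set.range b) := by rw [Module.Basis.span_eq]; trivial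
        induction hx using Submodule.span_induction with
        | mem x hmem => obtain ⟨i, rfl⟩ := hmem; exact base i j
        | zero => simp only [bz2, bz1, az, smul_zero, add_zero, zero_add]
        | add u v hu hv h1 h2 =>
          simp only [ba2, ba1, aa]
          rw [h1, h2]
          module
        | smul a u hu h1 =>
          simp only [bsr, bsl, as]
          rw [h1]
          module
      intro x y
      have hy : y ∈ Submodule.span ℂ (Set.range b) := by rw [Module.Basis.span_eq]; trivial
      induction hy using Submodule.span_induction with
      | mem y hmem => obtain ⟨j, rfl⟩ := hmem; exact step1 j x
      | zero => simp only [bz1, bz2, az, smul_zero, add_zero, zero_add]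
      | add u v hu hv h1 h2 =>
        simp only [ba2, ba1, aa]
        rw [h1, h2]
        module
      | smul a u hu h1 =>
        simp only [bsr, bsl, as]
        rw [h1]
        module
    intro i j x hx y hy
    exact key x y
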